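/- Let ψ > 0 and c₃ > 0 be real numbers, and let L : ℕ → ℕ satisfy L_{k+1} = ⌊√(L_k)⌋ · L_k for all k ≥ 0. Fix k ≥ 0 and assume: (i) L_k · exp(−ψ·L_k) ≤ L_k^{−8}; (ii) 32·(20·c₃ + 1) ≤ L_k; and let a_k, a_{k+1} ≥ 0 be real numbers satisfying a_{k+1} ≤ 32·(L_{k+1}/L_k)²·( a_k² + 20·c₃·L_k·exp(−ψ·L_k) ). If a_k ≤ L_k^{−4}, then a_{k+1} ≤ L_{k+1}^{−4}. -/
import Mathlib


/-- Arithmetic content of the induction step of the renormalization scheme. -/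
theorem stmt_14 (ψ c₃ : ℝ) (hψ : 0 < ψ) (hc₃ : 0 < c₃)
    (L : ℕ → ℕ) (hrec : ∀ k, L (k + 1) = Nat.sqrt (L k) * L k) (k : ℕ)
    (h1 : (L k : ℝ) * Real.exp (-ψ * L k) ≤ (L k : ℝ) ^ (-(8 : ℝ)))
    (h2 : 32 * (20 * c₃ + 1) ≤ (L k : ℝ))
    (a b : ℝ) (ha : 0 ≤ a) (hb : 0 ≤ b)
    (hab : b ≤ 32 * ((L (k + 1) : ℝ) / (L k : ℝ)) ^ 2 *
      (a ^ 2 + 20 * c₃ * (L k : ℝ) * Real.exp (-ψ * L k)))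
    (hak : a ≤ (L k : ℝ) ^ (-(4 : ℝ))) :
    b ≤ (L (k + 1) : ℝ) ^ (-(4 : ℝ)) := by
  set n : ℝ := (L k : ℝ) with hn_def
  have hn : 0 < n := lt_of_lt_of_le (by nlinarith) h2
  have hLpos : 0 < L k := by
    have h' : (0:ℝ) < (L k : ℝ) := hn_def ▸ hn
    exact_mod_cast h'
  set s : ℝ := (Nat.sqrt (L k) : ℝ) with hs_def
  have hs : 0 < s := by
    have h' : 0 < Nat.sqrt (L k) := Nat.sqrt_pos.mpr hLpos
    have h'' : (0:ℝ) < (Nat.sqrt (L k) : ℝ) := by exact_mod_cast h'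
    exact hs_def ▸ h''
  have hs2 : s ^ 2 ≤ n := by
    have h'' : ((Nat.sqrt (L k) : ℝ)) ^ 2 ≤ (L k : ℝ) := by
      exact_mod_cast Nat.sqrt_le' (L k)
    rw [hs_def, hn_def]
    exact h''
  have hL1 : (L (k + 1) : ℝ) = s * n := by rw [hrec k]; push_cast; ring
  have e8 : n ^ (-(8 : ℝ)) = (n ^ 8)⁻¹ := by
    rw [show (-(8 : ℝ)) = -((8 : ℕ) : ℝ) by norm_num, Real.rpow_neg hn.le,
      Real.rpow_natCast]
  have e4 : n ^ (-(4 : ℝ)) = (n ^ 4)⁻¹ := by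
    rw [show (-(4 : ℝ)) = -((4 : ℕ) : ℝ) by norm_num, Real.rpow_neg hn.le,
      Real.rpow_natCast]
  have eT : (L (k + 1) : ℝ) ^ (-(4 : ℝ)) = ((s * n) ^ 4)⁻¹ := by
    rw [hL1, show (-(4 : ℝ)) = -((4 : ℕ) : ℝ) by norm_num,
      Real.rpow_neg (by positivity), Real.rpow_natCast]
  rw [eT]
  rw [e8] at h1
  rw [e4] at hak
  have ha8 : a ^ 2 ≤ (n ^ 8)⁻¹ := by
    have h := mul_le_mul hak hak ha (by positivity)
    calc a ^ 2 = a * a := sq a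
      _ ≤ (n ^ 4)⁻¹ * (n ^ 4)⁻¹ := h
      _ = (n ^ 8)⁻¹ := by rw [← mul_inv]; ring_nf
  have hratio : ((L (k + 1) : ℝ) / n) ^ 2 = s ^ 2 := by
    rw [hL1, mul_div_assoc, div_self hn.ne', mul_one]
  rw [hratio] at hab
  have hexp : 0 ≤ Real.exp (-ψ * n) := (Real.exp_pos _).le
  have step1 : b ≤ 32 * (20 * c₃ + 1) * s ^ 2 * (n ^ 8)⁻¹ := by
    calc b ≤ 32 * s ^ 2 * (a ^ 2 + 20 * c₃ * n * Real.exp (-ψ * n)) := hab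
      _ ≤ 32 * s ^ 2 * ((n ^ 8)⁻¹ + 20 * c₃ * (n ^ 8)⁻¹) := by
          have h20 : 20 * c₃ * n * Real.exp (-ψ * n) ≤ 20 * c₃ * (n ^ 8)⁻¹ := by
            have h' := mul_le_mul_of_nonneg_left h1 (by positivity : (0:ℝ) ≤ 20 * c₃)
            calc 20 * c₃ * n * Real.exp (-ψ * n)
                = 20 * c₃ * (n * Real.exp (-ψ * n)) := by ring
              _ ≤ 20 * c₃ * (n ^ 8)⁻¹ := h'
          have hsum := add_le_add ha8 h20
          exact mul_le_mul_of_nonneg_left hsum (by positivity : (0:ℝ) ≤ 32 * s ^ 2)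
      _ = 32 * (20 * c₃ + 1) * s ^ 2 * (n ^ 8)⁻¹ := by ring
  have step2 : 32 * (20 * c₃ + 1) * s ^ 2 * (n ^ 8)⁻¹ ≤ n * s ^ 2 * (n ^ 8)⁻¹ := by
    have h' := mul_le_mul_of_nonneg_right h2
      (show (0:ℝ) ≤ s ^ 2 * (n ^ 8)⁻¹ by positivity)
    calc 32 * (20 * c₃ + 1) * s ^ 2 * (n ^ 8)⁻¹
        = 32 * (20 * c₃ + 1) * (s ^ 2 * (n ^ 8)⁻¹) := by ring
      _ ≤ n * (s ^ 2 * (n ^ 8)⁻¹) := h'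
      _ = n * s ^ 2 * (n ^ 8)⁻¹ := by ring
  have step3 : n * s ^ 2 * (n ^ 8)⁻¹ ≤ ((s * n) ^ 4)⁻¹ := by
    have h6 : s ^ 6 ≤ n ^ 3 := by
      calc s ^ 6 = (s ^ 2) ^ 3 := by ring
        _ ≤ n ^ 3 := pow_le_pow_left₀ (by positivity) hs2 3
    have key : n * s ^ 2 * (s * n) ^ 4 ≤ 1 * n ^ 8 := by
      nlinarith [mul_le_mul_of_nonneg_left h6 (by positivity : (0:ℝ) ≤ n ^ 5)]
    calc n * s ^ 2 * (n ^ 8)⁻¹ = (n * s ^ 2) / n ^ 8 := by ring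
      _ ≤ 1 / ((s * n) ^ 4) := by
          rw [div_le_div_iff₀ (by positivity) (by positivity)]; exact key
      _ = ((s * n) ^ 4)⁻¹ := one_div _
  linarith [step1, step2, step3]
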